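/- arXiv:1109.1798 — 2 statements merged into one kernel-verified Lean document; each statement's English description precedes it below -/
import Mathlib

section
/- Let g > 0, σ > 0 and ρ̃ ∈ ℝ, and assume that either ρ̃ ≤ 0, or ρ̃ > 0 and σ > σ_c := ρ̃ g max{L₁², L₂²}. Then there exists a constant C > 0, depending only on σ, ρ̃, g, L₁, L₂, such that for every C¹ horizontally periodic function f : ℝ² → ℝ with ∫_Q f = 0 one has σ ∫_Q |∇f|² − ρ̃ g ∫_Q f² ≥ C ( ∫_Q f² + ∫_Q |∇f|² ). -/
open MeasureTheory
open Complex intervalIntegral AddCircle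
open scoped ENNReal

lemma parseval_aux {T : ℝ} [hT : Fact (0 < T)] {g : ℝ → ℝ} (hg : Continuous g) :
    Summable (fun n : ℤ =>
        ‖fourierCoeffOn (lt_add_of_pos_right 0 hT.out) (fun x => (g x : ℂ)) n‖ ^ 2) ∧
      (∑' n : ℤ, ‖fourierCoeffOn (lt_add_of_pos_right 0 hT.out) (fun x => (g x : ℂ)) n‖ ^ 2)
        = (1 / T) * ∫ x in (0:ℝ)..T, g x ^ 2 := by
  set F : ℝ → ℂ := fun x => (g x : ℂ) with hF
  set G : AddCircle T → ℂ := AddCircle.liftIoc T 0 F with hG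
  have hGmeas : Measurable G := by
    exact (Complex.measurable_ofReal.comp hg.measurable).comp
      (measurable_subtype_coe.comp (AddCircle.measurableEquivIoc T 0).measurable)
  obtain ⟨Cb, hCb⟩ := (isCompact_Icc (a := (0:ℝ)) (b := T)).exists_bound_of_continuousOn
    (f := F) (Complex.continuous_ofReal.comp hg).continuousOn
  have hGmem : MemLp G 2 (@haarAddCircle T hT) := by
    refine MemLp.of_bound hGmeas.aestronglyMeasurable Cb (Filter.Eventually.of_forall fun z => ?_)
    have hx := ((AddCircle.equivIoc T 0) z).2
    have : G z = F ((AddCircle.equivIoc T 0) z) := rfl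
    rw [this]
    exact hCb _ ⟨le_of_lt (by simpa using hx.1), by simpa using hx.2⟩
  set GLp : Lp ℂ 2 (@haarAddCircle T hT) := hGmem.toLp G with hGLp
  have hcoeff : ∀ n : ℤ, fourierCoeff (GLp : AddCircle T → ℂ) n = fourierCoeff G n := by
    intro n
    apply MeasureTheory.integral_congr_ae
    filter_upwards [hGmem.coeFn_toLp] with z hz
    rw [hz]
  have hcoeff2 : ∀ n : ℤ, fourierCoeff G n
      = fourierCoeffOn (lt_add_of_pos_right 0 hT.out) F n := fun n =>
    fourierCoeff_liftIoc_eq F n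
  have hpars := tsum_sq_fourierCoeff GLp
  have hsum : Summable fun i : ℤ => ‖fourierCoeff (GLp : AddCircle T → ℂ) i‖ ^ 2 := by
    have h1 := lp.memℓp (fourierBasis.repr GLp)
    have h2 := h1.summable (by norm_num)
    have h3 : (fun i : ℤ => ‖(fourierBasis.repr GLp) i‖ ^ ((2:ℝ≥0∞)).toReal)
        = fun i : ℤ => ‖fourierCoeff (GLp : AddCircle T → ℂ) i‖ ^ (2:ℕ) := by
      funext i
      rw [fourierBasis_repr]
      norm_num
    rwa [h3] at h2
  have hInt : ∫ t : AddCircle T, ‖(GLp : AddCircle T → ℂ) t‖ ^ 2 ∂haarAddCircle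
      = ∫ t : AddCircle T, ‖G t‖ ^ 2 ∂haarAddCircle := by
    apply MeasureTheory.integral_congr_ae
    filter_upwards [hGmem.coeFn_toLp] with z hz
    rw [hz]
  -- relate the haar integral to the interval integral
  have hIoc : ∫ x in (0:ℝ)..T, ‖G x‖ ^ 2 = ∫ x in (0:ℝ)..T, g x ^ 2 := by
    rw [integral_of_le hT.out.le, integral_of_le hT.out.le]
    apply setIntegral_congr_fun measurableSet_Ioc
    intro x hx
    have : G x = F x := AddCircle.liftIoc_coe_apply (by simpa using hx)
    show ‖G (x : AddCircle T)‖ ^ 2 = g x ^ 2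
    rw [this]
    simp [hF, Complex.norm_real, sq_abs]
  have hvol : ∫ x in (0:ℝ)..T, ‖G (x : AddCircle T)‖ ^ 2
      = T * ∫ t : AddCircle T, ‖G t‖ ^ 2 ∂haarAddCircle := by
    have h0 := AddCircle.intervalIntegral_preimage T 0 (fun z => ‖G z‖ ^ 2)
    rw [zero_add] at h0
    rw [h0, volume_eq_smul_haarAddCircle, MeasureTheory.integral_smul_measure,
      ENNReal.toReal_ofReal hT.out.le, smul_eq_mul]
  constructor
  · simp_rw [← hcoeff2, ← hcoeff]
    exact hsum
  · simp_rw [← hcoeff2, ← hcoeff]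
    rw [hpars, hInt, ← hIoc, hvol, one_div, inv_mul_eq_div, mul_div_cancel_left₀ _ hT.out.ne']

lemma wirtinger1D {T : ℝ} (hT0 : 0 < T) {f f' : ℝ → ℝ}
    (hd : ∀ x, HasDerivAt f (f' x) x) (hc' : Continuous f')
    (hper : ∀ x, f (x + T) = f x)
    (hmean : (∫ x in (0:ℝ)..T, f x) = 0) :
    ∫ x in (0:ℝ)..T, f x ^ 2 ≤ (T / (2 * Real.pi)) ^ 2 * ∫ x in (0:ℝ)..T, f' x ^ 2 := by
  haveI hfact : Fact (0 < T) := ⟨hT0⟩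
  have hcf : Continuous f := continuous_iff_continuousAt.2 fun x => (hd x).continuousAt
  set F : ℝ → ℂ := fun x => (f x : ℂ) with hFdef
  set F' : ℝ → ℂ := fun x => (f' x : ℂ) with hF'def
  have hab : (0:ℝ) < 0 + T := lt_add_of_pos_right 0 hT0
  set c : ℤ → ℂ := fun n => fourierCoeffOn hab F n with hcdef
  set c' : ℤ → ℂ := fun n => fourierCoeffOn hab F' n with hc'def
  obtain ⟨hsumF, hparsF⟩ := parseval_aux (T := T) (g := f) hcf
  obtain ⟨hsumF', hparsF'⟩ := parseval_aux (T := T) (g := f') hc'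
  have hsumF : Summable fun n : ℤ => ‖c n‖ ^ 2 := hsumF
  have hsumF' : Summable fun n : ℤ => ‖c' n‖ ^ 2 := hsumF'
  have hparsF : (∑' n : ℤ, ‖c n‖ ^ 2) = (1 / T) * ∫ x in (0:ℝ)..T, f x ^ 2 := hparsF
  have hparsF' : (∑' n : ℤ, ‖c' n‖ ^ 2) = (1 / T) * ∫ x in (0:ℝ)..T, f' x ^ 2 := hparsF'
  have hpi := Real.pi_pos
  -- the zero coefficient vanishes
  have hc0 : c 0 = 0 := by
    rw [hcdef]
    simp only [fourierCoeffOn_eq_integral, neg_zero, fourier_zero, one_smul, zero_add, sub_zero]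
    rw [hFdef]
    rw [intervalIntegral.integral_ofReal, hmean]
    simp
  -- the coefficient bound for nonzero n
  have hkey : ∀ n : ℤ, ‖c n‖ ^ 2 ≤ (T / (2 * Real.pi)) ^ 2 * ‖c' n‖ ^ 2 := by
    intro n
    rcases eq_or_ne n 0 with rfl | hn
    · have : ‖c 0‖ ^ 2 = 0 := by rw [hc0]; simp
      rw [this]
      positivity
    · have hder : ∀ x ∈ Set.uIcc (0:ℝ) (0 + T), HasDerivAt F (F' x) x := fun x _ =>
        (hd x).ofReal_comp
      have hint : IntervalIntegrable F' volume 0 (0 + T) :=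
        (Complex.continuous_ofReal.comp hc').intervalIntegrable _ _
      have hrel := fourierCoeffOn_of_hasDerivAt hab hn hder hint
      have hFT : F (0 + T) - F 0 = 0 := by
        rw [hFdef]
        simp only [zero_add]
        rw [show f T = f 0 by simpa using hper 0]
        simp
      rw [hFT, mul_zero, zero_sub] at hrel
      have hcast : ((0 + T : ℝ) : ℂ) - ((0:ℝ) : ℂ) = (T : ℂ) := by push_cast; ring
      rw [hcast] at hrel
      have h1 : ‖(1 / (-2 * (Real.pi:ℂ) * Complex.I * (n:ℂ)) : ℂ)‖
          = 1 / (2 * Real.pi * |(n:ℝ)|) := by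
        rw [norm_div, norm_one]
        simp only [norm_mul, Complex.norm_I, Complex.norm_intCast]
        rw [show ((-2 : ℂ)) = ((-2 : ℝ) : ℂ) by norm_num, Complex.norm_real,
          Complex.norm_real]
        simp [abs_of_pos hpi, Int.cast_abs]
      have hnorm : ‖c n‖ = 1 / (2 * Real.pi * |(n:ℝ)|) * (T * ‖c' n‖) := by
        show ‖fourierCoeffOn hab F n‖ = _
        rw [hrel, norm_mul, norm_neg, norm_mul, h1, Complex.norm_real,
          Real.norm_eq_abs, abs_of_pos hT0]
      have habs : (1:ℝ) ≤ |(n:ℝ)| := by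
        rw [← Int.cast_abs]
        exact_mod_cast Int.one_le_abs hn
      have hle : ‖c n‖ ≤ (T / (2 * Real.pi)) * ‖c' n‖ := by
        rw [hnorm]
        have h2 : 1 / (2 * Real.pi * |(n:ℝ)|) ≤ 1 / (2 * Real.pi) :=
          one_div_le_one_div_of_le (by positivity) (by nlinarith)
        calc 1 / (2 * Real.pi * |(n:ℝ)|) * (T * ‖c' n‖)
            ≤ 1 / (2 * Real.pi) * (T * ‖c' n‖) :=
              mul_le_mul_of_nonneg_right h2 (by positivity)
          _ = (T / (2 * Real.pi)) * ‖c' n‖ := by ring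
      calc ‖c n‖ ^ 2 ≤ ((T / (2 * Real.pi)) * ‖c' n‖) ^ 2 :=
            pow_le_pow_left₀ (norm_nonneg _) hle 2
        _ = (T / (2 * Real.pi)) ^ 2 * ‖c' n‖ ^ 2 := by rw [mul_pow]
  -- assemble
  have hsum_le : (∑' n : ℤ, ‖c n‖ ^ 2) ≤ ∑' n : ℤ, (T / (2 * Real.pi)) ^ 2 * ‖c' n‖ ^ 2 :=
    hsumF.tsum_le_tsum hkey (hsumF'.mul_left _)
  rw [tsum_mul_left, hparsF, hparsF'] at hsum_le
  have h := mul_le_mul_of_nonneg_left hsum_le hT0.le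
  have e1 : T * (1 / T * ∫ x in (0:ℝ)..T, f x ^ 2) = ∫ x in (0:ℝ)..T, f x ^ 2 := by
    field_simp
  have e2 : T * ((T / (2 * Real.pi)) ^ 2 * (1 / T * ∫ x in (0:ℝ)..T, f' x ^ 2))
      = (T / (2 * Real.pi)) ^ 2 * ∫ x in (0:ℝ)..T, f' x ^ 2 := by
    field_simp
  rwa [e1, e2] at h

lemma sq_integral_le {b : ℝ} (hb : 0 < b) {g : ℝ → ℝ} (hg : Continuous g) :
    (∫ x in (0:ℝ)..b, g x) ^ 2 ≤ b * ∫ x in (0:ℝ)..b, g x ^ 2 := by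
  set A := ∫ x in (0:ℝ)..b, g x with hA
  set c : ℝ := A / b with hc
  have hint1 : IntervalIntegrable (fun x => g x ^ 2) volume 0 b :=
    (hg.pow 2).intervalIntegrable _ _
  have hint2 : IntervalIntegrable (fun x => 2 * c * g x) volume 0 b :=
    (continuous_const.mul hg).intervalIntegrable _ _
  have h0 : (0:ℝ) ≤ ∫ x in (0:ℝ)..b, (g x - c) ^ 2 :=
    intervalIntegral.integral_nonneg hb.le fun x _ => sq_nonneg _
  have hexp : ∫ x in (0:ℝ)..b, (g x - c) ^ 2
      = (∫ x in (0:ℝ)..b, g x ^ 2) - 2 * c * A + b * c ^ 2 := by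
    have h : ∀ x : ℝ, (g x - c) ^ 2 = (g x ^ 2 - 2 * c * g x) + c ^ 2 := fun x => by ring
    simp_rw [h]
    rw [intervalIntegral.integral_add (hint1.sub hint2) intervalIntegrable_const,
      intervalIntegral.integral_sub hint1 hint2,
      intervalIntegral.integral_const_mul, intervalIntegral.integral_const]
    rw [← hA]
    simp only [smul_eq_mul, sub_zero]
    try ring
  have hcb : c * b = A := div_mul_cancel₀ A hb.ne'
  have h1 : (0:ℝ) ≤ (∫ x in (0:ℝ)..b, g x ^ 2) - 2 * c * A + b * c ^ 2 := hexp ▸ h0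
  nlinarith [h1, hcb, mul_nonneg hb.le h1]

lemma cell_integral_eq {a b : ℝ} (ha : 0 < a) (hb : 0 < b) {h : ℝ × ℝ → ℝ}
    (hh : Continuous h) :
    ∫ x in Set.Icc (0:ℝ) a ×ˢ Set.Icc (0:ℝ) b, h x
      = ∫ x₁ in (0:ℝ)..a, ∫ x₂ in (0:ℝ)..b, h (x₁, x₂) := by
  have hint : IntegrableOn h (Set.Icc (0:ℝ) a ×ˢ Set.Icc (0:ℝ) b)
      (volume.prod volume) := by
    rw [← Measure.volume_eq_prod]
    exact hh.continuousOn.integrableOn_compact (isCompact_Icc.prod isCompact_Icc)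
  rw [show (volume : Measure (ℝ × ℝ)) = volume.prod volume from Measure.volume_eq_prod _ _]
  rw [MeasureTheory.setIntegral_prod h hint]
  rw [MeasureTheory.integral_Icc_eq_integral_Ioc, ← intervalIntegral.integral_of_le ha.le]
  apply intervalIntegral.integral_congr
  intro x₁ _
  show ∫ x₂ in Set.Icc (0:ℝ) b, h (x₁, x₂) = ∫ x₂ in (0:ℝ)..b, h (x₁, x₂)
  rw [MeasureTheory.integral_Icc_eq_integral_Ioc, ← intervalIntegral.integral_of_le hb.le]

/-- The periodic cell `Q = [0, 2πL₁] × [0, 2πL₂]`. -/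
def Qcell (L₁ L₂ : ℝ) : Set (ℝ × ℝ) :=
  Set.Icc 0 (2 * Real.pi * L₁) ×ˢ Set.Icc 0 (2 * Real.pi * L₂)

set_option maxHeartbeats 2000000

/-- Coercivity above the critical surface tension: if `g > 0`, `σ > 0` and either `ρ̃ ≤ 0`,
or `ρ̃ > 0` and `σ > σ_c = ρ̃ g max{L₁², L₂²}`, then there is `C > 0` (depending only on
`σ, ρ̃, g, L₁, L₂`) so that for every zero-average `C¹` horizontally periodic `f`:
`σ ∫_Q |∇f|² − ρ̃ g ∫_Q f² ≥ C (∫_Q f² + ∫_Q |∇f|²)`. -/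
theorem stmt_2 (L₁ L₂ : ℝ) (hL₁ : 0 < L₁) (hL₂ : 0 < L₂)
    (g σ ρt : ℝ) (hg : 0 < g) (hσ : 0 < σ)
    (hcase : ρt ≤ 0 ∨ (0 < ρt ∧ ρt * g * max (L₁ ^ 2) (L₂ ^ 2) < σ)) :
    ∃ C > 0, ∀ f : ℝ × ℝ → ℝ, ContDiff ℝ 1 f →
      (∀ x₁ x₂ : ℝ, f (x₁ + 2 * Real.pi * L₁, x₂) = f (x₁, x₂)) →
      (∀ x₁ x₂ : ℝ, f (x₁, x₂ + 2 * Real.pi * L₂) = f (x₁, x₂)) →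
      (∫ x in Qcell L₁ L₂, f x) = 0 →
      σ * (∫ x in Qcell L₁ L₂, ((fderiv ℝ f x (1, 0)) ^ 2 + (fderiv ℝ f x (0, 1)) ^ 2))
          - ρt * g * (∫ x in Qcell L₁ L₂, (f x) ^ 2)
        ≥ C * ((∫ x in Qcell L₁ L₂, (f x) ^ 2)
            + ∫ x in Qcell L₁ L₂, ((fderiv ℝ f x (1, 0)) ^ 2 + (fderiv ℝ f x (0, 1)) ^ 2)) := by
  have hpi := Real.pi_pos
  set M := max (L₁ ^ 2) (L₂ ^ 2) with hM
  have hM0 : 0 < M := lt_max_iff.2 (Or.inl (by positivity))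
  set C := (σ - max ρt 0 * g * M) / (M + 1) with hC
  have hC0 : 0 < C := by
    rcases hcase with hneg | ⟨hpos, hlt⟩
    · rw [hC, max_eq_right hneg]
      have : σ - 0 * g * M = σ := by ring
      rw [this]
      positivity
    · rw [hC, max_eq_left hpos.le]
      exact div_pos (by linarith) (by linarith)
  refine ⟨C, hC0, ?_⟩
  intro f hf hper1 hper2 hmean
  set a : ℝ := 2 * Real.pi * L₁ with hadef
  set b : ℝ := 2 * Real.pi * L₂ with hbdef
  have ha : 0 < a := by rw [hadef]; positivity
  have hb : 0 < b := by rw [hbdef]; positivity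
  have hQ : Qcell L₁ L₂ = Set.Icc (0:ℝ) a ×ˢ Set.Icc (0:ℝ) b := rfl
  obtain ⟨d₁, hd₁⟩ : ∃ d : ℝ × ℝ → ℝ, ∀ p, fderiv ℝ f p (1, 0) = d p := ⟨_, fun _ => rfl⟩
  obtain ⟨d₂, hd₂⟩ : ∃ d : ℝ × ℝ → ℝ, ∀ p, fderiv ℝ f p (0, 1) = d p := ⟨_, fun _ => rfl⟩
  have hcf : Continuous f := hf.continuous
  have hd1c : Continuous d₁ := by
    have : d₁ = fun p => fderiv ℝ f p (1, 0) := funext fun p => (hd₁ p).symm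
    rw [this]
    exact (hf.continuous_fderiv one_ne_zero).clm_apply continuous_const
  have hd2c : Continuous d₂ := by
    have : d₂ = fun p => fderiv ℝ f p (0, 1) := funext fun p => (hd₂ p).symm
    rw [this]
    exact (hf.continuous_fderiv one_ne_zero).clm_apply continuous_const
  have hD1 : ∀ p : ℝ × ℝ, HasDerivAt (fun t => f (t, p.2)) (d₁ p) p.1 := by
    intro p
    rw [← hd₁ p]
    have hcurve : HasDerivAt (fun t : ℝ => (t, p.2)) ((1:ℝ), (0:ℝ)) p.1 :=
      (hasDerivAt_id _).prodMk (hasDerivAt_const _ _)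
    exact ((hf.differentiable one_ne_zero) p).hasFDerivAt.comp_hasDerivAt p.1 hcurve
  have hD2 : ∀ p : ℝ × ℝ, HasDerivAt (fun t => f (p.1, t)) (d₂ p) p.2 := by
    intro p
    rw [← hd₂ p]
    have hcurve : HasDerivAt (fun t : ℝ => (p.1, t)) ((0:ℝ), (1:ℝ)) p.2 :=
      (hasDerivAt_const _ _).prodMk (hasDerivAt_id _)
    exact ((hf.differentiable one_ne_zero) p).hasFDerivAt.comp_hasDerivAt p.2 hcurve
  -- mean in the second variable, and its derivative
  set μf : ℝ → ℝ := fun x₁ => (1 / b) * ∫ x₂ in (0:ℝ)..b, f (x₁, x₂) with hμ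
  set νf : ℝ → ℝ := fun x₁ => (1 / b) * ∫ x₂ in (0:ℝ)..b, d₁ (x₁, x₂) with hν
  have hμc : Continuous μf := by
    apply Continuous.mul continuous_const
    exact continuous_parametric_intervalIntegral_of_continuous'
      (f := fun x₁ x₂ => f (x₁, x₂)) (by fun_prop) 0 b
  have hνc : Continuous νf := by
    apply Continuous.mul continuous_const
    exact continuous_parametric_intervalIntegral_of_continuous'
      (f := fun x₁ x₂ => d₁ (x₁, x₂)) (by fun_prop) 0 b
  have hμd : ∀ x₁ : ℝ, HasDerivAt μf (νf x₁) x₁ := by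
    intro t
    obtain ⟨K, hK⟩ := (IsCompact.prod (isCompact_Icc (a := t - 1) (b := t + 1))
      (isCompact_Icc (a := (0:ℝ)) (b := b))).exists_bound_of_continuousOn hd1c.continuousOn
    have key := intervalIntegral.hasDerivAt_integral_of_dominated_loc_of_deriv_le
      (F := fun x₁ x₂ => f (x₁, x₂)) (F' := fun x₁ x₂ => d₁ (x₁, x₂)) (x₀ := t)
      (a := 0) (b := b) (bound := fun _ => K) (μ := volume) (s := Metric.ball t 1) (Metric.ball_mem_nhds t zero_lt_one)
      (Filter.Eventually.of_forall fun x =>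
        (Continuous.aestronglyMeasurable (by fun_prop)))
      ((by fun_prop : Continuous fun x₂ => f (t, x₂)).intervalIntegrable _ _)
      (Continuous.aestronglyMeasurable (by fun_prop))
      (Filter.Eventually.of_forall fun x₂ hx₂ x hx => by
        have hxt : |x - t| < 1 := by
          have := Metric.mem_ball.1 hx
          rwa [Real.dist_eq] at this
        have hxt' := abs_lt.1 hxt
        have hx₂' : x₂ ∈ Set.Ioc (0:ℝ) b := by rwa [Set.uIoc_of_le hb.le] at hx₂
        exact hK (x, x₂) ⟨⟨by linarith, by linarith⟩, ⟨hx₂'.1.le, hx₂'.2⟩⟩)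
      intervalIntegrable_const
      (Filter.Eventually.of_forall fun x₂ _ x _ => hD1 (x, x₂))
    exact HasDerivAt.const_mul (1 / b) key.2
  -- slice Wirtinger in the second variable
  have hS1 : ∀ x₁ : ℝ, (∫ x₂ in (0:ℝ)..b, f (x₁, x₂) ^ 2)
      ≤ b * μf x₁ ^ 2 + L₂ ^ 2 * ∫ x₂ in (0:ℝ)..b, d₂ (x₁, x₂) ^ 2 := by
    intro x₁
    have hdd : ∀ x₂ : ℝ, HasDerivAt (fun t => f (x₁, t) - μf x₁) (d₂ (x₁, x₂)) x₂ :=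
      fun x₂ => (hD2 (x₁, x₂)).sub_const _
    have hper' : ∀ x₂ : ℝ, f (x₁, x₂ + b) - μf x₁ = f (x₁, x₂) - μf x₁ := fun x₂ => by
      rw [hper2 x₁ x₂]
    have hmean' : (∫ x₂ in (0:ℝ)..b, (f (x₁, x₂) - μf x₁)) = 0 := by
      rw [intervalIntegral.integral_sub
        ((by fun_prop : Continuous fun x₂ => f (x₁, x₂)).intervalIntegrable _ _)
        intervalIntegrable_const, intervalIntegral.integral_const]
      rw [hμ]
      simp only [smul_eq_mul, sub_zero]
      field_simp
      ring
    have hw := wirtinger1D hb hdd (by fun_prop) hper' hmean'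
    have hL2 : b / (2 * Real.pi) = L₂ := by
      rw [hbdef]; field_simp
    rw [hL2] at hw
    have hexp : ∫ x₂ in (0:ℝ)..b, (f (x₁, x₂) - μf x₁) ^ 2
        = (∫ x₂ in (0:ℝ)..b, f (x₁, x₂) ^ 2) - b * μf x₁ ^ 2 := by
      have h : ∀ t : ℝ, (f (x₁, t) - μf x₁) ^ 2
          = (f (x₁, t) ^ 2 - 2 * μf x₁ * f (x₁, t)) + μf x₁ ^ 2 := fun t => by ring
      simp_rw [h]
      have hi1 : IntervalIntegrable (fun t => f (x₁, t) ^ 2) volume 0 b :=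
        ((by fun_prop : Continuous fun t => f (x₁, t) ^ 2).intervalIntegrable _ _)
      have hi2 : IntervalIntegrable (fun t => 2 * μf x₁ * f (x₁, t)) volume 0 b :=
        ((by fun_prop : Continuous fun t => 2 * μf x₁ * f (x₁, t)).intervalIntegrable _ _)
      rw [intervalIntegral.integral_add (hi1.sub hi2) intervalIntegrable_const,
        intervalIntegral.integral_sub hi1 hi2, intervalIntegral.integral_const_mul,
        intervalIntegral.integral_const]
      have hbm : (∫ x₂ in (0:ℝ)..b, f (x₁, x₂)) = b * μf x₁ := by
        rw [hμ]; field_simp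
      rw [hbm]
      simp only [smul_eq_mul, sub_zero]
      ring
    rw [hexp] at hw
    linarith
  -- iterated integrals
  set I1 : ℝ := ∫ x₁ in (0:ℝ)..a, ∫ x₂ in (0:ℝ)..b, d₁ (x₁, x₂) ^ 2 with hI1
  set I2 : ℝ := ∫ x₁ in (0:ℝ)..a, ∫ x₂ in (0:ℝ)..b, d₂ (x₁, x₂) ^ 2 with hI2
  set Fit : ℝ := ∫ x₁ in (0:ℝ)..a, ∫ x₂ in (0:ℝ)..b, f (x₁, x₂) ^ 2 with hFit
  have hcontF2 : Continuous fun x₁ => ∫ x₂ in (0:ℝ)..b, f (x₁, x₂) ^ 2 :=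
    continuous_parametric_intervalIntegral_of_continuous'
      (f := fun x₁ x₂ => f (x₁, x₂) ^ 2) (μ := volume) (by fun_prop) 0 b
  have hcontD1 : Continuous fun x₁ => ∫ x₂ in (0:ℝ)..b, d₁ (x₁, x₂) ^ 2 :=
    continuous_parametric_intervalIntegral_of_continuous'
      (f := fun x₁ x₂ => d₁ (x₁, x₂) ^ 2) (μ := volume) (by fun_prop) 0 b
  have hcontD2 : Continuous fun x₁ => ∫ x₂ in (0:ℝ)..b, d₂ (x₁, x₂) ^ 2 :=
    continuous_parametric_intervalIntegral_of_continuous'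
      (f := fun x₁ x₂ => d₂ (x₁, x₂) ^ 2) (μ := volume) (by fun_prop) 0 b
  have step1 : Fit ≤ b * (∫ x₁ in (0:ℝ)..a, μf x₁ ^ 2) + L₂ ^ 2 * I2 := by
    have hmono := intervalIntegral.integral_mono_on (μ := volume) ha.le
      (hcontF2.intervalIntegrable _ _)
      (((continuous_const.mul (hμc.pow 2)).add
        (continuous_const.mul hcontD2)).intervalIntegrable _ _)
      (fun x₁ _ => hS1 x₁)
    simp only [Pi.add_apply, Pi.mul_apply, Pi.pow_apply, ← hbdef] at hmono
    rwa [intervalIntegral.integral_add (f := fun x => b * μf x ^ 2)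
        (g := fun x => L₂ ^ 2 * ∫ x₂ in (0:ℝ)..b, d₂ (x, x₂) ^ 2)
        ((continuous_const.mul (hμc.pow 2)).intervalIntegrable _ _)
        ((continuous_const.mul hcontD2).intervalIntegrable _ _),
      intervalIntegral.integral_const_mul, intervalIntegral.integral_const_mul] at hmono
  have hμper : ∀ x₁ : ℝ, μf (x₁ + a) = μf x₁ := by
    intro x₁
    simp only [hμ]
    congr 1
    apply intervalIntegral.integral_congr
    intro x₂ _
    exact hper1 x₁ x₂
  have hμmean : (∫ x₁ in (0:ℝ)..a, μf x₁) = 0 := by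
    have h1 : (∫ x₁ in (0:ℝ)..a, μf x₁)
        = (1 / b) * ∫ x₁ in (0:ℝ)..a, ∫ x₂ in (0:ℝ)..b, f (x₁, x₂) :=
      intervalIntegral.integral_const_mul _ _
    rw [h1, ← cell_integral_eq ha hb hcf, ← hQ, hmean, mul_zero]
  have hμw := wirtinger1D ha hμd hνc hμper hμmean
  have hL1 : a / (2 * Real.pi) = L₁ := by rw [hadef]; field_simp
  rw [hL1] at hμw
  have hνsq : ∀ x₁ : ℝ, νf x₁ ^ 2 ≤ (1 / b) * ∫ x₂ in (0:ℝ)..b, d₁ (x₁, x₂) ^ 2 := by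
    intro x₁
    have hcs := sq_integral_le hb (g := fun x₂ => d₁ (x₁, x₂)) (by fun_prop)
    have hval : νf x₁ = (1 / b) * ∫ x₂ in (0:ℝ)..b, d₁ (x₁, x₂) := rfl
    rw [hval, mul_pow, div_pow, one_pow]
    calc (1 / b ^ 2) * (∫ x₂ in (0:ℝ)..b, d₁ (x₁, x₂)) ^ 2
        ≤ (1 / b ^ 2) * (b * ∫ x₂ in (0:ℝ)..b, d₁ (x₁, x₂) ^ 2) :=
          mul_le_mul_of_nonneg_left hcs (by positivity)
      _ = (1 / b) * ∫ x₂ in (0:ℝ)..b, d₁ (x₁, x₂) ^ 2 := by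
          field_simp
  have step2 : (∫ x₁ in (0:ℝ)..a, νf x₁ ^ 2) ≤ (1 / b) * I1 := by
    have hmono := intervalIntegral.integral_mono_on (μ := volume) ha.le
      ((hνc.pow 2).intervalIntegrable _ _)
      ((continuous_const.mul hcontD1).intervalIntegrable _ _)
      (fun x₁ _ => hνsq x₁)
    simp only [Pi.add_apply, Pi.mul_apply, Pi.pow_apply] at hmono
    rwa [intervalIntegral.integral_const_mul] at hmono
  have hI10 : 0 ≤ I1 := intervalIntegral.integral_nonneg ha.le fun x₁ _ =>
    intervalIntegral.integral_nonneg hb.le fun x₂ _ => sq_nonneg _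
  have hI20 : 0 ≤ I2 := intervalIntegral.integral_nonneg ha.le fun x₁ _ =>
    intervalIntegral.integral_nonneg hb.le fun x₂ _ => sq_nonneg _
  have hFit0 : 0 ≤ Fit := intervalIntegral.integral_nonneg ha.le fun x₁ _ =>
    intervalIntegral.integral_nonneg hb.le fun x₂ _ => sq_nonneg _
  have hP : Fit ≤ L₁ ^ 2 * I1 + L₂ ^ 2 * I2 := by
    have h1 : (∫ x₁ in (0:ℝ)..a, μf x₁ ^ 2) ≤ L₁ ^ 2 * ((1 / b) * I1) :=
      le_trans hμw (mul_le_mul_of_nonneg_left step2 (by positivity))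
    have h2 : b * (∫ x₁ in (0:ℝ)..a, μf x₁ ^ 2) ≤ b * (L₁ ^ 2 * ((1 / b) * I1)) :=
      mul_le_mul_of_nonneg_left h1 hb.le
    have h3 : b * (L₁ ^ 2 * ((1 / b) * I1)) = L₁ ^ 2 * I1 := by
      field_simp
    linarith [step1]
  have hgoal1 : (∫ x in Qcell L₁ L₂, (f x) ^ 2) = Fit := by
    rw [hQ, cell_integral_eq ha hb (h := fun x => f x ^ 2) (hcf.pow 2)]
  have hsplitIn : ∀ x₁ : ℝ, (∫ x₂ in (0:ℝ)..b, (d₁ (x₁, x₂) ^ 2 + d₂ (x₁, x₂) ^ 2))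
      = (∫ x₂ in (0:ℝ)..b, d₁ (x₁, x₂) ^ 2) + ∫ x₂ in (0:ℝ)..b, d₂ (x₁, x₂) ^ 2 :=
    fun x₁ => intervalIntegral.integral_add
      ((by fun_prop : Continuous fun x₂ => d₁ (x₁, x₂) ^ 2).intervalIntegrable _ _)
      ((by fun_prop : Continuous fun x₂ => d₂ (x₁, x₂) ^ 2).intervalIntegrable _ _)
  have hgoal2 : (∫ x in Qcell L₁ L₂, (d₁ x ^ 2 + d₂ x ^ 2)) = I1 + I2 := by
    rw [hQ, cell_integral_eq ha hb (by fun_prop : Continuous fun x => d₁ x ^ 2 + d₂ x ^ 2)]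
    simp_rw [hsplitIn]
    exact intervalIntegral.integral_add (hcontD1.intervalIntegrable _ _)
      (hcontD2.intervalIntegrable _ _)
  simp only [hd₁, hd₂]
  rw [hgoal1, hgoal2]
  have hCM : C * (M + 1) = σ - max ρt 0 * g * M := by
    rw [hC]
    field_simp
  have hMB1 : L₁ ^ 2 ≤ M := le_max_left _ _
  have hMB2 : L₂ ^ 2 ≤ M := le_max_right _ _
  have hD : 0 ≤ M * (I1 + I2) - Fit := by
    nlinarith [hP, mul_le_mul_of_nonneg_right hMB1 hI10, mul_le_mul_of_nonneg_right hMB2 hI20]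
  have h1 : 0 ≤ C * (M * (I1 + I2) - Fit) := mul_nonneg hC0.le hD
  have h2 : 0 ≤ (max ρt 0 * g) * (M * (I1 + I2) - Fit) :=
    mul_nonneg (mul_nonneg (le_max_right ρt 0) hg.le) hD
  have h3 : 0 ≤ (max ρt 0 - ρt) * g * Fit :=
    mul_nonneg (mul_nonneg (sub_nonneg.2 (le_max_left ρt 0)) hg.le) hFit0
  nlinarith [h1, h2, h3, hCM]
end

section
/- Sobolev product estimate in Fourier form (two-dimensional torus): let 0 ≤ r ≤ s₁ ≤ s₂ be real numbers with s₁ > 1. Then there exists a constant C > 0, depending only on r, s₁, s₂, such that for all c, d : ℤ² → ℂ with A² := Σ_{n ∈ ℤ²} (1 + |n|²)^{s₁} |c(n)|² < ∞ and B² := Σ_{n ∈ ℤ²} (1 + |n|²)^{s₂} |d(n)|² < ∞, the convolution e(n) := Σ_{m ∈ ℤ²} c(m) d(n − m) converges absolutely for every n, and Σ_{n ∈ ℤ²} (1 + |n|²)^{r} |e(n)|² ≤ C · A² · B². -/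
set_option maxHeartbeats 1000000

/-- The Sobolev weight `(1 + |n|²)` of a lattice point `n ∈ ℤ²`. -/
def sobolevWeight (n : ℤ × ℤ) : ℝ :=
  1 + (((n.1 : ℝ)) ^ 2 + ((n.2 : ℝ)) ^ 2)

namespace Stmt14Aux
open ENNReal MeasureTheory


noncomputable def W (n : ℤ × ℤ) : ℝ≥0∞ := ENNReal.ofReal (sobolevWeight n)

lemma one_le_sw (n : ℤ × ℤ) : 1 ≤ sobolevWeight n := by
  unfold sobolevWeight; nlinarith [sq_nonneg ((n.1:ℝ)), sq_nonneg ((n.2:ℝ))]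

lemma sw_pos (n : ℤ × ℤ) : 0 < sobolevWeight n := lt_of_lt_of_le one_pos (one_le_sw n)

lemma one_le_W (n : ℤ × ℤ) : 1 ≤ W n := by
  rw [W, ← ENNReal.ofReal_one]
  exact ENNReal.ofReal_le_ofReal (one_le_sw n)

lemma W_ne_top (n : ℤ × ℤ) : W n ≠ ⊤ := ENNReal.ofReal_ne_top

lemma W_ne_zero (n : ℤ × ℤ) : W n ≠ 0 := by
  intro h; have := one_le_W n; rw [h] at this; simp at this

lemma rpow_two' (x : ℝ≥0∞) : x ^ (2:ℝ) = x * x := by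
  rw [show (2:ℝ) = ((2:ℕ):ℝ) by norm_num, ENNReal.rpow_natCast]; ring

lemma cs (f g : ℤ × ℤ → ℝ≥0∞) :
    ∑' i, f i * g i ≤ (∑' i, f i ^ (2:ℝ)) ^ ((1:ℝ)/2) * (∑' i, g i ^ (2:ℝ)) ^ ((1:ℝ)/2) := by
  have hpq : Real.HolderConjugate 2 2 := Real.HolderConjugate.two_two
  have h := ENNReal.lintegral_mul_le_Lp_mul_Lq (Measure.count : Measure (ℤ × ℤ)) hpq
    (measurable_of_countable f).aemeasurable (measurable_of_countable g).aemeasurable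
  simpa [lintegral_count] using h

lemma tsum_translate (G : ℤ × ℤ → ℝ≥0∞) (m : ℤ × ℤ) : ∑' n, G (n - m) = ∑' n, G n :=
  (Equiv.subRight m).tsum_eq G

lemma conv_comm (F G : ℤ × ℤ → ℝ≥0∞) (n : ℤ × ℤ) :
    ∑' m, F m * G (n - m) = ∑' m, G m * F (n - m) := by
  have := (Equiv.subLeft n).tsum_eq (fun m => F m * G (n - m))
  simp only [Equiv.subLeft_apply] at this
  rw [← this]
  apply tsum_congr; intro m
  rw [show n - (n - m) = m by abel, mul_comm]

lemma half_sq (x : ℝ≥0∞) : (x ^ ((1:ℝ)/2)) ^ (2:ℝ) = x := by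
  rw [← ENNReal.rpow_mul]; norm_num

/-- Young's inequality `‖F ∗ G‖₂² ≤ ‖F‖₁² ‖G‖₂²` in `ℝ≥0∞`. -/
lemma young (F G : ℤ × ℤ → ℝ≥0∞) :
    ∑' n, (∑' m, F m * G (n - m)) ^ (2:ℝ)
      ≤ (∑' m, F m) ^ (2:ℝ) * ∑' m, G m ^ (2:ℝ) := by
  have stepA : ∀ n, (∑' m, F m * G (n - m)) ^ (2:ℝ)
      ≤ (∑' m, F m) * ∑' m, F m * G (n - m) ^ (2:ℝ) := by
    intro n
    have h := cs (fun m => F m ^ ((1:ℝ)/2)) (fun m => F m ^ ((1:ℝ)/2) * G (n - m))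
    have e1 : ∀ m, F m ^ ((1:ℝ)/2) * (F m ^ ((1:ℝ)/2) * G (n - m)) = F m * G (n - m) := by
      intro m
      rw [← mul_assoc, ← ENNReal.rpow_add_of_nonneg _ _ (by norm_num) (by norm_num)]
      norm_num
    have e2 : ∀ m, (F m ^ ((1:ℝ)/2) * G (n - m)) ^ (2:ℝ) = F m * G (n - m) ^ (2:ℝ) := by
      intro m
      rw [ENNReal.mul_rpow_of_nonneg _ _ (by norm_num : (0:ℝ) ≤ 2), half_sq]
    simp only [e1, e2, half_sq] at h
    calc (∑' m, F m * G (n - m)) ^ (2:ℝ)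
        ≤ ((∑' m, F m) ^ ((1:ℝ)/2) * (∑' m, F m * G (n - m) ^ (2:ℝ)) ^ ((1:ℝ)/2)) ^ (2:ℝ) :=
          ENNReal.rpow_le_rpow h (by norm_num)
      _ = (∑' m, F m) * ∑' m, F m * G (n - m) ^ (2:ℝ) := by
          rw [ENNReal.mul_rpow_of_nonneg _ _ (by norm_num : (0:ℝ) ≤ 2), half_sq, half_sq]
  calc ∑' n, (∑' m, F m * G (n - m)) ^ (2:ℝ)
      ≤ ∑' n, (∑' m, F m) * ∑' m, F m * G (n - m) ^ (2:ℝ) := ENNReal.tsum_le_tsum stepA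
    _ = (∑' m, F m) * ∑' n, ∑' m, F m * G (n - m) ^ (2:ℝ) := ENNReal.tsum_mul_left
    _ = (∑' m, F m) * ∑' m, ∑' n, F m * G (n - m) ^ (2:ℝ) := by rw [ENNReal.tsum_comm]
    _ = (∑' m, F m) * ∑' m, F m * ∑' n, G (n - m) ^ (2:ℝ) := by
        congr 1; exact tsum_congr fun m => ENNReal.tsum_mul_left
    _ = (∑' m, F m) * ∑' m, F m * ∑' n, G n ^ (2:ℝ) := by
        congr 1; exact tsum_congr fun m => by rw [tsum_translate (fun k => G k ^ (2:ℝ)) m]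
    _ = (∑' m, F m) ^ (2:ℝ) * ∑' m, G m ^ (2:ℝ) := by
        rw [ENNReal.tsum_mul_right, rpow_two']; ring

/-- ℓ¹ bound via Cauchy–Schwarz against the weight. -/
lemma l1 (s : ℝ) (G : ℤ × ℤ → ℝ≥0∞) :
    ∑' n, G n ≤ (∑' n, W n ^ (-s)) ^ ((1:ℝ)/2) * (∑' n, W n ^ s * G n ^ (2:ℝ)) ^ ((1:ℝ)/2) := by
  have key : ∀ n, G n = W n ^ (-s/2) * (W n ^ (s/2) * G n) := by
    intro n
    rw [← mul_assoc, ← ENNReal.rpow_add _ _ (W_ne_zero n) (W_ne_top n),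
      show -s/2 + s/2 = 0 by ring, ENNReal.rpow_zero, one_mul]
  calc ∑' n, G n = ∑' n, W n ^ (-s/2) * (W n ^ (s/2) * G n) := tsum_congr key
    _ ≤ (∑' n, (W n ^ (-s/2)) ^ (2:ℝ)) ^ ((1:ℝ)/2)
        * (∑' n, (W n ^ (s/2) * G n) ^ (2:ℝ)) ^ ((1:ℝ)/2) := cs _ _
    _ = (∑' n, W n ^ (-s)) ^ ((1:ℝ)/2) * (∑' n, W n ^ s * G n ^ (2:ℝ)) ^ ((1:ℝ)/2) := by
        congr 2
        · exact tsum_congr fun n => by rw [← ENNReal.rpow_mul]; norm_num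
        · exact tsum_congr fun n => by
            rw [ENNReal.mul_rpow_of_nonneg _ _ (by norm_num : (0:ℝ) ≤ 2), ← ENNReal.rpow_mul]
            norm_num



lemma phi_summable {s : ℝ} (hs : 1 < s) :
    Summable (fun k : ℤ => (1 + (k:ℝ)^2) ^ (-(s/2))) := by
  have hb : Summable (fun k : ℤ => (2:ℝ)^(s/2) * (1 / |(k:ℝ) + 1/2| ^ s)) :=
    ((Real.summable_one_div_int_add_rpow (1/2) s).mpr hs).mul_left _
  apply hb.of_nonneg_of_le
  · intro k; positivity
  · intro k
    have ha : (0:ℝ) < 1 + (k:ℝ)^2 := by positivity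
    have hbpos : (0:ℝ) < |(k:ℝ) + 1/2| := by
      rcases le_or_gt 0 k with h | h
      · have : (0:ℝ) ≤ (k:ℝ) := by exact_mod_cast h
        rw [abs_of_nonneg (by linarith)]; linarith
      · have : (k:ℝ) ≤ -1 := by exact_mod_cast (by omega : k ≤ -1)
        rw [abs_of_nonpos (by linarith)]; linarith
    have hb2s : |(k:ℝ)+1/2| ^ s ≤ (2:ℝ)^(s/2) * (1 + (k:ℝ)^2)^(s/2) := by
      have h1 : |(k:ℝ)+1/2| ^ s = (|(k:ℝ)+1/2| ^ (2:ℝ)) ^ (s/2) := by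
        rw [← Real.rpow_mul (abs_nonneg _)]; congr 1; ring
      have h2 : |(k:ℝ)+1/2| ^ (2:ℝ) ≤ 2 * (1 + (k:ℝ)^2) := by
        rw [show (2:ℝ) = ((2:ℕ):ℝ) by norm_num, Real.rpow_natCast, sq_abs]
        nlinarith [sq_nonneg ((k:ℝ) - 1/2)]
      calc |(k:ℝ)+1/2| ^ s = (|(k:ℝ)+1/2| ^ (2:ℝ)) ^ (s/2) := h1
        _ ≤ (2 * (1 + (k:ℝ)^2)) ^ (s/2) :=
            Real.rpow_le_rpow (Real.rpow_nonneg (abs_nonneg _) _) h2 (by positivity)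
        _ = (2:ℝ)^(s/2) * (1 + (k:ℝ)^2)^(s/2) := Real.mul_rpow (by norm_num) ha.le
    have has : 0 < (1 + (k:ℝ)^2) ^ (s/2) := Real.rpow_pos_of_pos ha _
    have hbs : 0 < |(k:ℝ)+1/2| ^ s := Real.rpow_pos_of_pos hbpos _
    rw [Real.rpow_neg ha.le, ← one_div, mul_one_div, div_le_div_iff₀ has hbs]
    nlinarith [hb2s]

lemma K_ne_top {s : ℝ} (hs : 1 < s) : (∑' n : ℤ × ℤ, W n ^ (-s)) ≠ ⊤ := by
  set φ : ℤ → ℝ := fun k => (1 + (k:ℝ)^2) ^ (-(s/2)) with hφdef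
  have hφ := phi_summable hs
  have hφnn : ∀ k : ℤ, 0 ≤ φ k := fun k => Real.rpow_nonneg (by positivity) _
  have hψ : Summable (fun n : ℤ × ℤ => φ n.1 * φ n.2) :=
    hφ.mul_of_nonneg hφ hφnn hφnn
  have hle : ∀ n : ℤ × ℤ, W n ^ (-s) ≤ ENNReal.ofReal (φ n.1 * φ n.2) := by
    intro n
    rw [W, ENNReal.ofReal_rpow_of_pos (sw_pos n)]
    apply ENNReal.ofReal_le_ofReal
    have ha : (0:ℝ) < 1 + (n.1:ℝ)^2 := by positivity
    have hb : (0:ℝ) < 1 + (n.2:ℝ)^2 := by positivity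
    have hab : (1 + (n.1:ℝ)^2) * (1 + (n.2:ℝ)^2) ≤ (sobolevWeight n) ^ (2:ℝ) := by
      rw [show (2:ℝ) = ((2:ℕ):ℝ) by norm_num, Real.rpow_natCast]
      unfold sobolevWeight
      nlinarith [sq_nonneg ((n.1:ℝ)), sq_nonneg ((n.2:ℝ)), sq_nonneg ((n.1:ℝ)*(n.2:ℝ)),
        sq_nonneg ((n.1:ℝ)^2 + (n.2:ℝ)^2)]
    calc sobolevWeight n ^ (-s) = ((sobolevWeight n) ^ (2:ℝ)) ^ (-(s/2)) := by
          rw [← Real.rpow_mul (sw_pos n).le]; congr 1; ring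
      _ ≤ ((1 + (n.1:ℝ)^2) * (1 + (n.2:ℝ)^2)) ^ (-(s/2)) :=
          Real.rpow_le_rpow_of_nonpos (by positivity) hab (by linarith)
      _ = φ n.1 * φ n.2 := Real.mul_rpow ha.le hb.le
  have hsum : (∑' n : ℤ × ℤ, W n ^ (-s)) ≤ ∑' n : ℤ × ℤ, ENNReal.ofReal (φ n.1 * φ n.2) :=
    ENNReal.tsum_le_tsum hle
  refine ne_top_of_le_ne_top ?_ hsum
  rw [← ENNReal.ofReal_tsum_of_nonneg (fun n => mul_nonneg (hφnn _) (hφnn _)) hψ]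
  exact ENNReal.ofReal_ne_top

lemma W_split {t : ℝ} (ht : 0 ≤ t) (n m : ℤ × ℤ) :
    W n ^ t ≤ (4:ℝ≥0∞) ^ t * (W m ^ t + W (n - m) ^ t) := by
  have hre : sobolevWeight n ≤ 2 * (sobolevWeight m + sobolevWeight (n - m)) := by
    have h1 : ((n-m).1 : ℝ) = (n.1:ℝ) - (m.1:ℝ) := by
      rw [Prod.fst_sub]; push_cast; ring
    have h2 : ((n-m).2 : ℝ) = (n.2:ℝ) - (m.2:ℝ) := by
      rw [Prod.snd_sub]; push_cast; ring
    unfold sobolevWeight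
    rw [h1, h2]
    nlinarith [sq_nonneg ((n.1:ℝ) - 2*(m.1:ℝ)), sq_nonneg ((n.2:ℝ) - 2*(m.2:ℝ))]
  have h2 : W n ≤ 2 * (W m + W (n - m)) := by
    rw [W, W, W, show ((2:ℝ≥0∞)) = ENNReal.ofReal 2 by simp,
      ← ENNReal.ofReal_add (sw_pos m).le (sw_pos (n-m)).le, ← ENNReal.ofReal_mul (by norm_num)]
    exact ENNReal.ofReal_le_ofReal hre
  have h3 : W n ≤ 4 * max (W m) (W (n - m)) := by
    refine h2.trans ?_
    have hmax : W m + W (n - m) ≤ 2 * max (W m) (W (n - m)) := by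
      rw [two_mul]; exact add_le_add (le_max_left _ _) (le_max_right _ _)
    calc 2 * (W m + W (n - m)) ≤ 2 * (2 * max (W m) (W (n - m))) :=
          mul_le_mul_right hmax 2
      _ = 4 * max (W m) (W (n - m)) := by ring
  calc W n ^ t ≤ (4 * max (W m) (W (n - m))) ^ t := ENNReal.rpow_le_rpow h3 ht
    _ = (4:ℝ≥0∞) ^ t * (max (W m) (W (n - m))) ^ t := ENNReal.mul_rpow_of_nonneg _ _ ht
    _ ≤ (4:ℝ≥0∞) ^ t * (W m ^ t + W (n - m) ^ t) := by
        apply mul_le_mul_right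
        rcases max_cases (W m) (W (n - m)) with ⟨h, _⟩ | ⟨h, _⟩ <;> rw [h]
        · exact le_self_add
        · exact le_add_self


lemma tsum_reflect (G : ℤ × ℤ → ℝ≥0∞) (n : ℤ × ℤ) : ∑' m, G (n - m) = ∑' m, G m :=
  (Equiv.subLeft n).tsum_eq G

lemma one_le_W_rpow {t : ℝ} (ht : 0 ≤ t) (n : ℤ × ℤ) : 1 ≤ W n ^ t := by
  calc (1:ℝ≥0∞) = 1 ^ t := (ENNReal.one_rpow t).symm
    _ ≤ W n ^ t := ENNReal.rpow_le_rpow (one_le_W n) ht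

lemma bridge (s : ℝ) (z : ℂ) (n : ℤ × ℤ) :
    ENNReal.ofReal (sobolevWeight n ^ s * ‖z‖ ^ 2)
      = W n ^ s * (ENNReal.ofReal (‖z‖)) ^ (2:ℝ) := by
  rw [ENNReal.ofReal_mul (Real.rpow_nonneg (sw_pos n).le s), W,
    ENNReal.ofReal_rpow_of_pos (sw_pos n), ENNReal.ofReal_pow (norm_nonneg _),
    show (2:ℝ) = ((2:ℕ):ℝ) by norm_num, ENNReal.rpow_natCast]

lemma add_sq_le (x y : ℝ≥0∞) : (x + y) ^ (2:ℝ) ≤ 4 * (x ^ (2:ℝ) + y ^ (2:ℝ)) := by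
  rw [rpow_two', rpow_two', rpow_two']
  rcases le_total x y with h | h
  · calc (x+y)*(x+y) ≤ (y+y)*(y+y) := by gcongr
      _ = 4 * (y*y) := by ring
      _ ≤ 4 * (x*x + y*y) := by exact mul_le_mul_right le_add_self 4
  · calc (x+y)*(x+y) ≤ (x+x)*(x+x) := by gcongr
      _ = 4 * (x*x) := by ring
      _ ≤ 4 * (x*x + y*y) := by exact mul_le_mul_right le_self_add 4

lemma sq_weighted (t : ℝ) (F : ℤ × ℤ → ℝ≥0∞) (m : ℤ × ℤ) :
    (W m ^ (t/2) * F m) ^ (2:ℝ) = W m ^ t * F m ^ (2:ℝ) := by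
  rw [ENNReal.mul_rpow_of_nonneg _ _ (by norm_num : (0:ℝ) ≤ 2), ← ENNReal.rpow_mul]
  norm_num


end Stmt14Aux

open Stmt14Aux ENNReal

/-- Sobolev product estimate in Fourier form on the two-dimensional torus: for
`0 ≤ r ≤ s₁ ≤ s₂` with `s₁ > 1` there is `C > 0` (depending only on `r, s₁, s₂`)
so that for Fourier coefficients `c ∈ h^{s₁}` and `d ∈ h^{s₂}`, the convolution
`e(n) = Σ_m c(m) d(n−m)` converges absolutely for each `n` and
`Σ_n (1+|n|²)^r |e(n)|² ≤ C A² B²`. -/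
theorem stmt_14 (r s₁ s₂ : ℝ) (hr0 : 0 ≤ r) (hrs₁ : r ≤ s₁) (hs₁s₂ : s₁ ≤ s₂)
    (hs₁ : 1 < s₁) :
    ∃ C > 0, ∀ c d : ℤ × ℤ → ℂ,
      Summable (fun n : ℤ × ℤ => sobolevWeight n ^ s₁ * ‖c n‖ ^ 2) →
      Summable (fun n : ℤ × ℤ => sobolevWeight n ^ s₂ * ‖d n‖ ^ 2) →
      (∀ n : ℤ × ℤ, Summable (fun m : ℤ × ℤ => ‖c m * d (n - m)‖)) ∧
      (∑' n : ℤ × ℤ, sobolevWeight n ^ r * ‖∑' m : ℤ × ℤ, c m * d (n - m)‖ ^ 2)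
        ≤ C * (∑' n : ℤ × ℤ, sobolevWeight n ^ s₁ * ‖c n‖ ^ 2)
            * (∑' n : ℤ × ℤ, sobolevWeight n ^ s₂ * ‖d n‖ ^ 2) := by
  classical
  set K : ℝ≥0∞ := ∑' n : ℤ × ℤ, W n ^ (-s₁) with hKdef
  have hK_ne_top : K ≠ ⊤ := K_ne_top hs₁
  set Chat : ℝ≥0∞ := (4:ℝ≥0∞) ^ r * 8 * K with hChat
  have hChat_ne_top : Chat ≠ ⊤ := by
    apply ENNReal.mul_ne_top (ENNReal.mul_ne_top ?_ (by norm_num)) hK_ne_top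
    exact ENNReal.rpow_ne_top_of_nonneg hr0 (by norm_num)
  refine ⟨Chat.toReal + 1, by positivity, ?_⟩
  intro c d hA hB
  have hs₁0 : (0:ℝ) ≤ s₁ := by linarith
  have hs₂0 : (0:ℝ) ≤ s₂ := by linarith
  set f : ℤ × ℤ → ℝ≥0∞ := fun n => ENNReal.ofReal (‖c n‖) with hfdef
  set g : ℤ × ℤ → ℝ≥0∞ := fun n => ENNReal.ofReal (‖d n‖) with hgdef
  set A2 : ℝ := ∑' n : ℤ × ℤ, sobolevWeight n ^ s₁ * ‖c n‖ ^ 2 with hA2def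
  set B2 : ℝ := ∑' n : ℤ × ℤ, sobolevWeight n ^ s₂ * ‖d n‖ ^ 2 with hB2def
  have hA2nn : 0 ≤ A2 := tsum_nonneg fun n =>
    mul_nonneg (Real.rpow_nonneg (sw_pos n).le _) (by positivity)
  have hB2nn : 0 ≤ B2 := tsum_nonneg fun n =>
    mul_nonneg (Real.rpow_nonneg (sw_pos n).le _) (by positivity)
  have hAt : (∑' n : ℤ × ℤ, W n ^ s₁ * f n ^ (2:ℝ)) = ENNReal.ofReal A2 := by
    rw [hA2def, ENNReal.ofReal_tsum_of_nonneg
      (fun n => mul_nonneg (Real.rpow_nonneg (sw_pos n).le _) (by positivity)) hA]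
    exact tsum_congr fun n => (bridge s₁ (c n) n).symm
  have hBt : (∑' n : ℤ × ℤ, W n ^ s₂ * g n ^ (2:ℝ)) = ENNReal.ofReal B2 := by
    rw [hB2def, ENNReal.ofReal_tsum_of_nonneg
      (fun n => mul_nonneg (Real.rpow_nonneg (sw_pos n).le _) (by positivity)) hB]
    exact tsum_congr fun n => (bridge s₂ (d n) n).symm
  -- ℓ² bounds without weight
  have hf2 : (∑' n, f n ^ (2:ℝ)) ≤ ENNReal.ofReal A2 := by
    rw [← hAt]
    exact ENNReal.tsum_le_tsum fun n =>
      le_mul_of_one_le_left zero_le (one_le_W_rpow hs₁0 n)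
  have hg2 : (∑' n, g n ^ (2:ℝ)) ≤ ENNReal.ofReal B2 := by
    rw [← hBt]
    exact ENNReal.tsum_le_tsum fun n =>
      le_mul_of_one_le_left zero_le (one_le_W_rpow hs₂0 n)
  set h : ℤ × ℤ → ℝ≥0∞ := fun n => ∑' m, f m * g (n - m) with hhdef
  have hh_le : ∀ n, h n ≤ (ENNReal.ofReal A2) ^ ((1:ℝ)/2) * (ENNReal.ofReal B2) ^ ((1:ℝ)/2) := by
    intro n
    calc h n ≤ (∑' m, f m ^ (2:ℝ)) ^ ((1:ℝ)/2)
          * (∑' m, g (n - m) ^ (2:ℝ)) ^ ((1:ℝ)/2) := cs f (fun m => g (n - m))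
      _ = (∑' m, f m ^ (2:ℝ)) ^ ((1:ℝ)/2) * (∑' m, g m ^ (2:ℝ)) ^ ((1:ℝ)/2) := by
          rw [tsum_reflect (fun k => g k ^ (2:ℝ)) n]
      _ ≤ (ENNReal.ofReal A2) ^ ((1:ℝ)/2) * (ENNReal.ofReal B2) ^ ((1:ℝ)/2) := by
          exact mul_le_mul' (ENNReal.rpow_le_rpow hf2 (by norm_num))
            (ENNReal.rpow_le_rpow hg2 (by norm_num))
  have hh_ne_top : ∀ n, h n ≠ ⊤ := by
    intro n
    refine ne_top_of_le_ne_top ?_ (hh_le n)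
    exact ENNReal.mul_ne_top (ENNReal.rpow_ne_top_of_nonneg (by norm_num) ENNReal.ofReal_ne_top)
      (ENNReal.rpow_ne_top_of_nonneg (by norm_num) ENNReal.ofReal_ne_top)
  -- summability of the convolution terms
  have hcoe : ∀ n m : ℤ × ℤ, (‖c m * d (n - m)‖₊ : ℝ≥0∞) = f m * g (n - m) := by
    intro n m
    rw [nnnorm_mul, ENNReal.coe_mul, hfdef, hgdef]
    simp only [ofReal_norm, enorm_eq_nnnorm]
  have hsum : ∀ n : ℤ × ℤ, Summable (fun m : ℤ × ℤ => ‖c m * d (n - m)‖) := by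
    intro n
    have h1 : (∑' m, (‖c m * d (n - m)‖₊ : ℝ≥0∞)) ≠ ⊤ := by
      rw [tsum_congr (hcoe n)]; exact hh_ne_top n
    have h2 := ENNReal.tsum_coe_ne_top_iff_summable.mp h1
    have h3 := NNReal.summable_coe.mpr h2
    simpa [coe_nnnorm] using h3
  refine ⟨hsum, ?_⟩
  -- bound |e n| by h n
  have he : ∀ n, ENNReal.ofReal (‖∑' m, c m * d (n - m)‖) ≤ h n := by
    intro n
    have hs' : Summable fun m => ‖c m * d (n - m)‖ := by
      exact hsum n
    have h1 : ‖∑' m, c m * d (n - m)‖ ≤ ∑' m, ‖c m * d (n - m)‖ := by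
      exact norm_tsum_le_tsum_norm hs'
    refine (ENNReal.ofReal_le_ofReal h1).trans ?_
    rw [ENNReal.ofReal_tsum_of_nonneg (fun m => by positivity) (hsum n)]
    refine le_of_eq (tsum_congr fun m => ?_)
    rw [norm_mul, ENNReal.ofReal_mul (by positivity)]
  -- the two half convolutions
  set F₁ : ℤ × ℤ → ℝ≥0∞ := fun m => W m ^ (r/2) * f m with hF₁
  set G₂ : ℤ × ℤ → ℝ≥0∞ := fun m => W m ^ (r/2) * g m with hG₂
  have hr2 : (0:ℝ) ≤ r/2 := by linarith
  have hpoint : ∀ n, W n ^ (r/2) * h n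
      ≤ (4:ℝ≥0∞) ^ (r/2) * ((∑' m, F₁ m * g (n - m)) + (∑' m, f m * G₂ (n - m))) := by
    intro n
    have step1 : W n ^ (r/2) * h n
        = ∑' m, W n ^ (r/2) * (f m * g (n - m)) := ENNReal.tsum_mul_left.symm
    have step2 : (∑' m, W n ^ (r/2) * (f m * g (n - m)))
        ≤ ∑' m, ((4:ℝ≥0∞) ^ (r/2) * (W m ^ (r/2) + W (n - m) ^ (r/2))) * (f m * g (n - m)) :=
      ENNReal.tsum_le_tsum fun m => mul_le_mul_left (W_split hr2 n m) _
    have step3 : (∑' m, ((4:ℝ≥0∞) ^ (r/2) * (W m ^ (r/2) + W (n - m) ^ (r/2))) * (f m * g (n - m)))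
        = (4:ℝ≥0∞) ^ (r/2) * ((∑' m, F₁ m * g (n - m)) + (∑' m, f m * G₂ (n - m))) := by
      have e1 : ∀ m, ((4:ℝ≥0∞) ^ (r/2) * (W m ^ (r/2) + W (n - m) ^ (r/2))) * (f m * g (n - m))
          = (4:ℝ≥0∞) ^ (r/2) * (F₁ m * g (n - m) + f m * G₂ (n - m)) := by
        intro m; simp only [hF₁, hG₂]; ring
      rw [tsum_congr e1, ENNReal.tsum_mul_left, ENNReal.tsum_add]
    calc W n ^ (r/2) * h n = ∑' m, W n ^ (r/2) * (f m * g (n - m)) := step1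
      _ ≤ _ := step2
      _ = _ := step3
  have hF₁sq : (∑' m, F₁ m ^ (2:ℝ)) ≤ ENNReal.ofReal A2 := by
    rw [← hAt]
    refine ENNReal.tsum_le_tsum fun m => ?_
    simp only [hF₁]
    rw [sq_weighted r f m]
    exact mul_le_mul_left (ENNReal.rpow_le_rpow_of_exponent_le (one_le_W m) hrs₁) _
  have hG₂sq : (∑' m, G₂ m ^ (2:ℝ)) ≤ ENNReal.ofReal B2 := by
    rw [← hBt]
    refine ENNReal.tsum_le_tsum fun m => ?_
    simp only [hG₂]
    rw [sq_weighted r g m]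
    exact mul_le_mul_left
      (ENNReal.rpow_le_rpow_of_exponent_le (one_le_W m) (le_trans hrs₁ hs₁s₂)) _
  have hgl1 : (∑' m, g m) ^ (2:ℝ) ≤ K * ENNReal.ofReal B2 := by
    have h1 := l1 s₂ g
    rw [hBt] at h1
    have hK2 : (∑' n : ℤ × ℤ, W n ^ (-s₂)) ≤ K := by
      rw [hKdef]
      exact ENNReal.tsum_le_tsum fun n =>
        ENNReal.rpow_le_rpow_of_exponent_le (one_le_W n) (by linarith)
    calc (∑' m, g m) ^ (2:ℝ)
        ≤ ((∑' n : ℤ × ℤ, W n ^ (-s₂)) ^ ((1:ℝ)/2)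
            * (ENNReal.ofReal B2) ^ ((1:ℝ)/2)) ^ (2:ℝ) :=
          ENNReal.rpow_le_rpow h1 (by norm_num)
      _ = (∑' n : ℤ × ℤ, W n ^ (-s₂)) * ENNReal.ofReal B2 := by
          rw [ENNReal.mul_rpow_of_nonneg _ _ (by norm_num : (0:ℝ) ≤ 2), half_sq, half_sq]
      _ ≤ K * ENNReal.ofReal B2 := mul_le_mul_left hK2 _
  have hfl1 : (∑' m, f m) ^ (2:ℝ) ≤ K * ENNReal.ofReal A2 := by
    have h1 := l1 s₁ f
    rw [hAt] at h1
    calc (∑' m, f m) ^ (2:ℝ)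
        ≤ ((∑' n : ℤ × ℤ, W n ^ (-s₁)) ^ ((1:ℝ)/2)
            * (ENNReal.ofReal A2) ^ ((1:ℝ)/2)) ^ (2:ℝ) :=
          ENNReal.rpow_le_rpow h1 (by norm_num)
      _ = (∑' n : ℤ × ℤ, W n ^ (-s₁)) * ENNReal.ofReal A2 := by
          rw [ENNReal.mul_rpow_of_nonneg _ _ (by norm_num : (0:ℝ) ≤ 2), half_sq, half_sq]
      _ = K * ENNReal.ofReal A2 := by rw [hKdef]
  have hS₁sum : (∑' n, (∑' m, F₁ m * g (n - m)) ^ (2:ℝ))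
      ≤ K * ENNReal.ofReal B2 * ENNReal.ofReal A2 :=
    calc (∑' n, (∑' m, F₁ m * g (n - m)) ^ (2:ℝ))
        = ∑' n, (∑' m, g m * F₁ (n - m)) ^ (2:ℝ) :=
          tsum_congr fun n => by rw [conv_comm F₁ g n]
      _ ≤ (∑' m, g m) ^ (2:ℝ) * ∑' m, F₁ m ^ (2:ℝ) := young g F₁
      _ ≤ K * ENNReal.ofReal B2 * ENNReal.ofReal A2 := mul_le_mul' hgl1 hF₁sq
  have hS₂sum : (∑' n, (∑' m, f m * G₂ (n - m)) ^ (2:ℝ))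
      ≤ K * ENNReal.ofReal A2 * ENNReal.ofReal B2 :=
    calc (∑' n, (∑' m, f m * G₂ (n - m)) ^ (2:ℝ))
        ≤ (∑' m, f m) ^ (2:ℝ) * ∑' m, G₂ m ^ (2:ℝ) := young f G₂
      _ ≤ K * ENNReal.ofReal A2 * ENNReal.ofReal B2 := mul_le_mul' hfl1 hG₂sq
  set T : ℝ≥0∞ :=
    ∑' n, W n ^ r * (ENNReal.ofReal (‖∑' m, c m * d (n - m)‖)) ^ (2:ℝ) with hT
  have hTbound : T ≤ Chat * ENNReal.ofReal A2 * ENNReal.ofReal B2 := by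
    have hterm : ∀ n, W n ^ r * (ENNReal.ofReal (‖∑' m, c m * d (n - m)‖)) ^ (2:ℝ)
        ≤ (4:ℝ≥0∞) ^ r * 4 * ((∑' m, F₁ m * g (n - m)) ^ (2:ℝ)
            + (∑' m, f m * G₂ (n - m)) ^ (2:ℝ)) := by
      intro n
      calc W n ^ r * (ENNReal.ofReal (‖∑' m, c m * d (n - m)‖)) ^ (2:ℝ)
          ≤ W n ^ r * h n ^ (2:ℝ) :=
            mul_le_mul_right (ENNReal.rpow_le_rpow (he n) (by norm_num)) _
        _ = (W n ^ (r/2) * h n) ^ (2:ℝ) := (sq_weighted r h n).symm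
        _ ≤ ((4:ℝ≥0∞) ^ (r/2)
              * ((∑' m, F₁ m * g (n - m)) + ∑' m, f m * G₂ (n - m))) ^ (2:ℝ) :=
            ENNReal.rpow_le_rpow (hpoint n) (by norm_num)
        _ = (4:ℝ≥0∞) ^ r
              * ((∑' m, F₁ m * g (n - m)) + ∑' m, f m * G₂ (n - m)) ^ (2:ℝ) := by
            rw [ENNReal.mul_rpow_of_nonneg _ _ (by norm_num : (0:ℝ) ≤ 2),
              ← ENNReal.rpow_mul, show r/2*2 = r by ring]
        _ ≤ (4:ℝ≥0∞) ^ r * (4 * ((∑' m, F₁ m * g (n - m)) ^ (2:ℝ)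
              + (∑' m, f m * G₂ (n - m)) ^ (2:ℝ))) :=
            mul_le_mul_right (add_sq_le _ _) _
        _ = (4:ℝ≥0∞) ^ r * 4 * ((∑' m, F₁ m * g (n - m)) ^ (2:ℝ)
              + (∑' m, f m * G₂ (n - m)) ^ (2:ℝ)) := by
            rw [mul_assoc]
    calc T ≤ ∑' n, (4:ℝ≥0∞) ^ r * 4 * ((∑' m, F₁ m * g (n - m)) ^ (2:ℝ)
            + (∑' m, f m * G₂ (n - m)) ^ (2:ℝ)) := ENNReal.tsum_le_tsum hterm
      _ = (4:ℝ≥0∞) ^ r * 4 * ((∑' n, (∑' m, F₁ m * g (n - m)) ^ (2:ℝ))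
            + ∑' n, (∑' m, f m * G₂ (n - m)) ^ (2:ℝ)) := by
          rw [ENNReal.tsum_mul_left, ENNReal.tsum_add]
      _ ≤ (4:ℝ≥0∞) ^ r * 4 * ((K * ENNReal.ofReal B2 * ENNReal.ofReal A2)
            + K * ENNReal.ofReal A2 * ENNReal.ofReal B2) :=
          mul_le_mul_right (add_le_add hS₁sum hS₂sum) _
      _ = Chat * ENNReal.ofReal A2 * ENNReal.ofReal B2 := by
          rw [hChat]; ring
  have hRHS_ne_top : Chat * ENNReal.ofReal A2 * ENNReal.ofReal B2 ≠ ⊤ :=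
    ENNReal.mul_ne_top (ENNReal.mul_ne_top hChat_ne_top ENNReal.ofReal_ne_top)
      ENNReal.ofReal_ne_top
  have hterm_ne_top : ∀ n,
      W n ^ r * (ENNReal.ofReal (‖∑' m, c m * d (n - m)‖)) ^ (2:ℝ) ≠ ⊤ := by
    intro n
    exact ENNReal.mul_ne_top (ENNReal.rpow_ne_top_of_nonneg hr0 (W_ne_top n))
      (ENNReal.rpow_ne_top_of_nonneg (by norm_num) ENNReal.ofReal_ne_top)
  have hLHS : (∑' n : ℤ × ℤ, sobolevWeight n ^ r
      * ‖∑' m : ℤ × ℤ, c m * d (n - m)‖ ^ 2) = T.toReal := by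
    rw [hT, ENNReal.tsum_toReal_eq hterm_ne_top]
    refine tsum_congr fun n => ?_
    rw [← bridge r (∑' m, c m * d (n - m)) n, ENNReal.toReal_ofReal
      (mul_nonneg (Real.rpow_nonneg (sw_pos n).le _) (by positivity))]
  rw [hLHS]
  have hfinal : T.toReal ≤ (Chat * ENNReal.ofReal A2 * ENNReal.ofReal B2).toReal :=
    ENNReal.toReal_mono hRHS_ne_top hTbound
  refine hfinal.trans ?_
  rw [ENNReal.toReal_mul, ENNReal.toReal_mul, ENNReal.toReal_ofReal hA2nn,
    ENNReal.toReal_ofReal hB2nn]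
  have hCle : Chat.toReal ≤ Chat.toReal + 1 := by linarith
  exact mul_le_mul_of_nonneg_right (mul_le_mul_of_nonneg_right hCle hA2nn) hB2nn
end
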